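/- For 0 < θ ≤ π/4, the function g(α) = cos α / cos(θ/2) + (cos α · tan(θ/2) + sin α) / (cos(θ/2) − sin(θ/2)) is (weakly) increasing on [0, θ/2], and hence is maximized at α = θ/2. -/
import Mathlib

open Real
theorem stmt_4 (θ : ℝ) (h0 : 0 < θ) (h1 : θ ≤ π / 4) :
    MonotoneOn (fun α => Real.cos α / Real.cos (θ / 2) +
        (Real.cos α * Real.tan (θ / 2) + Real.sin α) /
          (Real.cos (θ / 2) - Real.sin (θ / 2))) (Set.Icc 0 (θ / 2)) ∧
    ∀ α ∈ Set.Icc 0 (θ / 2),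
      Real.cos α / Real.cos (θ / 2) +
          (Real.cos α * Real.tan (θ / 2) + Real.sin α) /
            (Real.cos (θ / 2) - Real.sin (θ / 2)) ≤
        Real.cos (θ / 2) / Real.cos (θ / 2) +
          (Real.cos (θ / 2) * Real.tan (θ / 2) + Real.sin (θ / 2)) /
            (Real.cos (θ / 2) - Real.sin (θ / 2)) := by
  have hx0 : 0 < θ / 2 := by linarith
  have hx4 : θ / 2 < π / 4 := by
    have := Real.pi_pos; linarith
  have hc : 0 < Real.cos (θ / 2) := by
    apply Real.cos_pos_of_mem_Ioo
    constructor <;> [linarith [Real.pi_pos]; linarith [Real.pi_pos]]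
  have hsc : Real.sin (θ / 2) < Real.cos (θ / 2) := by
    have h1' : Real.sin (θ / 2) < Real.sin (π / 4) := by
      apply Real.strictMonoOn_sin (by constructor <;> nlinarith [Real.pi_pos])
        (by constructor <;> nlinarith [Real.pi_pos]) hx4
    have h2' : Real.cos (π / 4) < Real.cos (θ / 2) := by
      apply Real.strictAntiOn_cos (by constructor <;> nlinarith [Real.pi_pos])
        (by constructor <;> nlinarith [Real.pi_pos]) hx4
    rw [Real.sin_pi_div_four] at h1'
    rw [Real.cos_pi_div_four] at h2'
    linarith
  set c := Real.cos (θ / 2) with hcdef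
  set s := Real.sin (θ / 2) with hsdef
  have hT : Real.tan (θ / 2) = s / c := Real.tan_eq_sin_div_cos _
  have hcs : 0 < c - s := by linarith
  have hd : ∀ α : ℝ, HasDerivAt (fun α => Real.cos α / c +
      (Real.cos α * Real.tan (θ / 2) + Real.sin α) / (c - s))
      (-Real.sin α / c + (-Real.sin α * Real.tan (θ / 2) + Real.cos α) / (c - s)) α := by
    intro α
    exact ((Real.hasDerivAt_cos α).div_const c).add
      ((((Real.hasDerivAt_cos α).mul_const _).add (Real.hasDerivAt_sin α)).div_const (c - s))
  have hmono : MonotoneOn (fun α => Real.cos α / c +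
      (Real.cos α * Real.tan (θ / 2) + Real.sin α) / (c - s)) (Set.Icc 0 (θ / 2)) := by
    apply monotoneOn_of_deriv_nonneg (convex_Icc _ _)
    · exact fun α _ => ((hd α).continuousAt).continuousWithinAt
    · exact fun α _ => ((hd α).differentiableAt).differentiableWithinAt
    · intro α hα
      rw [interior_Icc] at hα
      rw [(hd α).deriv]
      have hαs : Real.sin α ≤ Real.cos α := by
        have h1' : Real.sin α ≤ Real.sin (π / 4) := by
          apply Real.strictMonoOn_sin.monotoneOn
            (by constructor <;> nlinarith [Real.pi_pos, hα.1, hα.2])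
            (by constructor <;> nlinarith [Real.pi_pos]) (by linarith [hα.2])
        have h2' : Real.cos (π / 4) ≤ Real.cos α := by
          apply Real.strictAntiOn_cos.antitoneOn
            (by constructor <;> nlinarith [Real.pi_pos, hα.1, hα.2])
            (by constructor <;> nlinarith [Real.pi_pos]) (by linarith [hα.2])
        rw [Real.sin_pi_div_four] at h1'
        rw [Real.cos_pi_div_four] at h2'
        linarith
      have heq : -Real.sin α / c + (-Real.sin α * Real.tan (θ / 2) + Real.cos α) / (c - s)
          = (Real.cos α - Real.sin α) / (c - s) := by
        rw [hT]; field_simp; ring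
      rw [heq]
      exact div_nonneg (by linarith) hcs.le
  exact ⟨hmono, fun α hα => hmono hα (Set.right_mem_Icc.mpr (by linarith)) hα.2⟩
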